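/- Let N be a positive integer, d a positive divisor of N, and Δ = gcd(d, N/d). Set g_d = [[1,0,0],[d,1,0],[0,0,1]] and v_d = (1,d,0)ᵀ, and let S be the subgroup of Γ₀(N,3) consisting of all γ with γ·v_d = v_d or γ·v_d = −v_d. Then: (i) for every γ ∈ S the matrix g_d⁻¹ γ g_d has vanishing (2,1) and (3,1) entries; (ii) the map π_d : S → GL₂(ℤ) sending γ to the lower-right 2×2 block of g_d⁻¹ γ g_d is a group homomorphism; (iii) the image of π_d is exactly Γ₁(N/d, Δ)^*; and (iv) the kernel of π_d is isomorphic to ℤ × ℤ. -/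

import Mathlib

/-- `SL₃(ℤ)`. -/
abbrev SL3 : Type := Matrix.SpecialLinearGroup (Fin 3) ℤ

/-- The matrix `g_d = [[1,0,0],[d,1,0],[0,0,1]]` as an element of `SL₃(ℤ)`. -/
def gMat (d : ℕ) : SL3 :=
  ⟨!![1, 0, 0; (d : ℤ), 1, 0; 0, 0, 1], by simp [Matrix.det_fin_three]⟩

/-- The subgroup `S` of `Γ₀(N,3) ⊆ SL₃(ℤ)` consisting of the `γ` with
`γ · (1,d,0)ᵀ = ± (1,d,0)ᵀ`. -/
def stabLineGroup (N d : ℕ) : Subgroup SL3 where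
  carrier := {γ |
    ((N : ℤ) ∣ (γ : Matrix (Fin 3) (Fin 3) ℤ) 1 0 ∧
     (N : ℤ) ∣ (γ : Matrix (Fin 3) (Fin 3) ℤ) 2 0) ∧
    ((γ : Matrix (Fin 3) (Fin 3) ℤ).mulVec ![1, (d : ℤ), 0] = ![1, (d : ℤ), 0] ∨
     (γ : Matrix (Fin 3) (Fin 3) ℤ).mulVec ![1, (d : ℤ), 0] = -![1, (d : ℤ), 0])}
  one_mem' := by
    refine ⟨⟨?_, ?_⟩, Or.inl ?_⟩
    · rw [Matrix.SpecialLinearGroup.coe_one, Matrix.one_apply_ne (by decide)]; exact dvd_zero _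
    · rw [Matrix.SpecialLinearGroup.coe_one, Matrix.one_apply_ne (by decide)]; exact dvd_zero _
    · rw [Matrix.SpecialLinearGroup.coe_one, Matrix.one_mulVec]
  mul_mem' := by
    rintro a b ⟨⟨ha1, ha2⟩, hav⟩ ⟨⟨hb1, hb2⟩, hbv⟩
    have hco : ∀ i : Fin 3, ((a * b : SL3) : Matrix (Fin 3) (Fin 3) ℤ) i 0 =
        (a : Matrix (Fin 3) (Fin 3) ℤ) i 0 * (b : Matrix (Fin 3) (Fin 3) ℤ) 0 0 +
        (a : Matrix (Fin 3) (Fin 3) ℤ) i 1 * (b : Matrix (Fin 3) (Fin 3) ℤ) 1 0 +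
        (a : Matrix (Fin 3) (Fin 3) ℤ) i 2 * (b : Matrix (Fin 3) (Fin 3) ℤ) 2 0 := by
      intro i
      rw [Matrix.SpecialLinearGroup.coe_mul, Matrix.mul_apply, Fin.sum_univ_three]
    have hmv : ((a * b : SL3) : Matrix (Fin 3) (Fin 3) ℤ).mulVec ![1, (d : ℤ), 0] =
        (a : Matrix (Fin 3) (Fin 3) ℤ).mulVec
          ((b : Matrix (Fin 3) (Fin 3) ℤ).mulVec ![1, (d : ℤ), 0]) := by
      rw [Matrix.SpecialLinearGroup.coe_mul, Matrix.mulVec_mulVec]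
    refine ⟨⟨?_, ?_⟩, ?_⟩
    · rw [hco 1]
      exact dvd_add (dvd_add (ha1.mul_right _) (hb1.mul_left _)) (hb2.mul_left _)
    · rw [hco 2]
      exact dvd_add (dvd_add (ha2.mul_right _) (hb1.mul_left _)) (hb2.mul_left _)
    · rcases hav with ha | ha <;> rcases hbv with hb | hb
      · left; rw [hmv, hb, ha]
      · right; rw [hmv, hb, Matrix.mulVec_neg, ha]
      · right; rw [hmv, hb, ha]
      · left; rw [hmv, hb, Matrix.mulVec_neg, ha, neg_neg]
  inv_mem' := by
    rintro a ⟨⟨ha1, ha2⟩, hav⟩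
    have hBA : ((a⁻¹ : SL3) : Matrix (Fin 3) (Fin 3) ℤ) * (a : Matrix (Fin 3) (Fin 3) ℤ)
        = 1 := by
      rw [← Matrix.SpecialLinearGroup.coe_mul, inv_mul_cancel,
        Matrix.SpecialLinearGroup.coe_one]
    set A : Matrix (Fin 3) (Fin 3) ℤ := (a : Matrix (Fin 3) (Fin 3) ℤ)
    set B : Matrix (Fin 3) (Fin 3) ℤ := ((a⁻¹ : SL3) : Matrix (Fin 3) (Fin 3) ℤ)
    have key : ∀ i : Fin 3,
        B i 0 * A 0 0 + B i 1 * A 1 0 + B i 2 * A 2 0 =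
          (1 : Matrix (Fin 3) (Fin 3) ℤ) i 0 := by
      intro i
      have h := (Matrix.ext_iff.mpr hBA) i 0
      rwa [Matrix.mul_apply, Fin.sum_univ_three] at h
    have h0 : (N : ℤ) ∣ B 0 0 * A 0 0 - 1 := by
      have h := key 0
      rw [Matrix.one_apply_eq] at h
      have he : B 0 0 * A 0 0 - 1 = -(B 0 1 * A 1 0) - B 0 2 * A 2 0 := by linarith
      rw [he]
      exact dvd_sub (dvd_neg.mpr (ha1.mul_left _)) (ha2.mul_left _)
    have hgen : ∀ i : Fin 3, i ≠ 0 → (N : ℤ) ∣ B i 0 := by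
      intro i hi
      have h := key i
      rw [Matrix.one_apply_ne hi] at h
      have hBi : (N : ℤ) ∣ B i 0 * A 0 0 := by
        have he : B i 0 * A 0 0 = -(B i 1 * A 1 0) - B i 2 * A 2 0 := by linarith
        rw [he]
        exact dvd_sub (dvd_neg.mpr (ha1.mul_left _)) (ha2.mul_left _)
      have he : B i 0 = B 0 0 * (B i 0 * A 0 0) - B i 0 * (B 0 0 * A 0 0 - 1) := by ring
      rw [he]
      exact dvd_sub (hBi.mul_left _) (h0.mul_left _)
    refine ⟨⟨hgen 1 (by decide), hgen 2 (by decide)⟩, ?_⟩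
    have hBv : B.mulVec (A.mulVec ![1, (d : ℤ), 0]) = ![1, (d : ℤ), 0] := by
      rw [Matrix.mulVec_mulVec, hBA, Matrix.one_mulVec]
    rcases hav with ha | ha
    · left; rwa [ha] at hBv
    · right
      rw [ha, Matrix.mulVec_neg] at hBv
      exact neg_eq_iff_eq_neg.mp hBv

def gInv (d : ℕ) : SL3 := ⟨!![1,0,0; -(d:ℤ),1,0; 0,0,1], by simp [Matrix.det_fin_three]⟩

lemma gMat_inv (d : ℕ) : (gMat d)⁻¹ = gInv d := by
  refine inv_eq_of_mul_eq_one_right ?_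
  apply Subtype.ext
  show ((gMat d : Matrix (Fin 3) (Fin 3) ℤ) * (gInv d : Matrix (Fin 3) (Fin 3) ℤ)) = 1
  norm_num [gMat, gInv, Matrix.mul_fin_three]
  exact Matrix.one_fin_three.symm

/-- the conjugated matrix -/
def conjM (d : ℕ) (γ : SL3) : Matrix (Fin 3) (Fin 3) ℤ :=
  (((gMat d)⁻¹ * γ * gMat d : SL3) : Matrix (Fin 3) (Fin 3) ℤ)

/-- lower-right 2×2 block of the conjugated matrix -/
def blkOf (d : ℕ) (γ : SL3) : Matrix (Fin 2) (Fin 2) ℤ :=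
  Matrix.of fun i j : Fin 2 => conjM d γ i.succ j.succ

lemma conj_eq (d : ℕ) (γ : SL3) :
    conjM d γ =
    !![(γ : Matrix (Fin 3) (Fin 3) ℤ) 0 0 + d * (γ : Matrix (Fin 3) (Fin 3) ℤ) 0 1,
       (γ : Matrix (Fin 3) (Fin 3) ℤ) 0 1, (γ : Matrix (Fin 3) (Fin 3) ℤ) 0 2;
       (γ : Matrix (Fin 3) (Fin 3) ℤ) 1 0 + d * (γ : Matrix (Fin 3) (Fin 3) ℤ) 1 1
         - d * ((γ : Matrix (Fin 3) (Fin 3) ℤ) 0 0 + d * (γ : Matrix (Fin 3) (Fin 3) ℤ) 0 1),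
       (γ : Matrix (Fin 3) (Fin 3) ℤ) 1 1 - d * (γ : Matrix (Fin 3) (Fin 3) ℤ) 0 1,
       (γ : Matrix (Fin 3) (Fin 3) ℤ) 1 2 - d * (γ : Matrix (Fin 3) (Fin 3) ℤ) 0 2;
       (γ : Matrix (Fin 3) (Fin 3) ℤ) 2 0 + d * (γ : Matrix (Fin 3) (Fin 3) ℤ) 2 1,
       (γ : Matrix (Fin 3) (Fin 3) ℤ) 2 1, (γ : Matrix (Fin 3) (Fin 3) ℤ) 2 2] := by
  unfold conjM
  rw [gMat_inv]
  show ((gInv d : Matrix (Fin 3) (Fin 3) ℤ) * (γ : Matrix (Fin 3) (Fin 3) ℤ) * (gMat d : Matrix (Fin 3) (Fin 3) ℤ)) = _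
  ext i j
  fin_cases i <;> fin_cases j <;>
    simp [gMat, gInv, Matrix.mul_apply, Matrix.vecMul, dotProduct, Fin.sum_univ_three] <;> ring

lemma conj_back (d : ℕ) (B : SL3) :
    ((gMat d * B * (gMat d)⁻¹ : SL3) : Matrix (Fin 3) (Fin 3) ℤ) =
    !![(B : Matrix (Fin 3) (Fin 3) ℤ) 0 0 - d * (B : Matrix (Fin 3) (Fin 3) ℤ) 0 1,
       (B : Matrix (Fin 3) (Fin 3) ℤ) 0 1, (B : Matrix (Fin 3) (Fin 3) ℤ) 0 2;
       d * (B : Matrix (Fin 3) (Fin 3) ℤ) 0 0 + (B : Matrix (Fin 3) (Fin 3) ℤ) 1 0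
         - d * (d * (B : Matrix (Fin 3) (Fin 3) ℤ) 0 1 + (B : Matrix (Fin 3) (Fin 3) ℤ) 1 1),
       d * (B : Matrix (Fin 3) (Fin 3) ℤ) 0 1 + (B : Matrix (Fin 3) (Fin 3) ℤ) 1 1,
       d * (B : Matrix (Fin 3) (Fin 3) ℤ) 0 2 + (B : Matrix (Fin 3) (Fin 3) ℤ) 1 2;
       (B : Matrix (Fin 3) (Fin 3) ℤ) 2 0 - d * (B : Matrix (Fin 3) (Fin 3) ℤ) 2 1,
       (B : Matrix (Fin 3) (Fin 3) ℤ) 2 1, (B : Matrix (Fin 3) (Fin 3) ℤ) 2 2] := by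
  rw [gMat_inv]
  show ((gMat d : Matrix (Fin 3) (Fin 3) ℤ) * (B : Matrix (Fin 3) (Fin 3) ℤ) * (gInv d : Matrix (Fin 3) (Fin 3) ℤ)) = _
  ext i j
  fin_cases i <;> fin_cases j <;>
    simp [gMat, gInv, Matrix.mul_apply, Matrix.vecMul, dotProduct, Fin.sum_univ_three] <;> ring

lemma mulVec_eq (A : Matrix (Fin 3) (Fin 3) ℤ) (d : ℕ) :
    A.mulVec ![1, (d:ℤ), 0] = ![A 0 0 + d * A 0 1, A 1 0 + d * A 1 1, A 2 0 + d * A 2 1] := by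
  ext i
  fin_cases i <;> simp [Matrix.mulVec, dotProduct, Fin.sum_univ_three] <;> ring

lemma conjM_mul (d : ℕ) (a b : SL3) : conjM d (a * b) = conjM d a * conjM d b := by
  unfold conjM
  rw [← Matrix.SpecialLinearGroup.coe_mul]
  congr 1
  group
  rfl

lemma conjM_det (d : ℕ) (γ : SL3) : (conjM d γ).det = 1 :=
  ((gMat d)⁻¹ * γ * gMat d : SL3).2

lemma conjM_conj (d : ℕ) (B : SL3) : conjM d (gMat d * B * (gMat d)⁻¹) = B := by
  unfold conjM
  congr 1
  group
  rfl
lemma facts (N d : ℕ) (γ : SL3) (h : γ ∈ stabLineGroup N d) :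
    (conjM d γ 0 0 = 1 ∨ conjM d γ 0 0 = -1) ∧ conjM d γ 1 0 = 0 ∧ conjM d γ 2 0 = 0 ∧
    (N:ℤ) ∣ d * conjM d γ 2 1 ∧
    (N:ℤ) ∣ d * (conjM d γ 0 0 - conjM d γ 1 1 - d * conjM d γ 0 1) := by
  obtain ⟨⟨hd1, hd2⟩, hv⟩ := h
  set A := (γ : Matrix (Fin 3) (Fin 3) ℤ) with hA
  rw [mulVec_eq] at hv
  have hB := conj_eq d γ
  rw [← hA] at hB
  have e0 : conjM d γ 0 0 = A 0 0 + d * A 0 1 := by rw [hB]; simp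
  have e01 : conjM d γ 0 1 = A 0 1 := by rw [hB]; simp
  have e10 : conjM d γ 1 0 = A 1 0 + d * A 1 1 - d * (A 0 0 + d * A 0 1) := by rw [hB]; simp
  have e11 : conjM d γ 1 1 = A 1 1 - d * A 0 1 := by rw [hB]; simp
  have e20 : conjM d γ 2 0 = A 2 0 + d * A 2 1 := by rw [hB]; simp
  have e21 : conjM d γ 2 1 = A 2 1 := by rw [hB]; simp
  obtain ⟨x, hx⟩ := hd1
  obtain ⟨y, hy⟩ := hd2
  rcases hv with hv | hv
  · have h0 : A 0 0 + d * A 0 1 = 1 := by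
      have := congrFun hv 0; simpa using this
    have h1 : A 1 0 + d * A 1 1 = d := by
      have := congrFun hv 1; simpa using this
    have h2 : A 2 0 + d * A 2 1 = 0 := by
      have := congrFun hv 2; simpa using this
    refine ⟨Or.inl (by rw [e0, h0]), by rw [e10, h0, h1]; ring, by rw [e20]; exact h2, ?_, ?_⟩
    · refine ⟨-y, ?_⟩; rw [e21]; rw [hy] at h2; linarith
    · refine ⟨x, ?_⟩
      rw [e0, e01, e11]
      rw [hx] at h1
      linear_combination (d:ℤ) * h0 - h1
  · have h0 : A 0 0 + d * A 0 1 = -1 := by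
      have := congrFun hv 0; simpa using this
    have h1 : A 1 0 + d * A 1 1 = -d := by
      have := congrFun hv 1
      simp only [Pi.neg_apply] at this
      simpa using this
    have h2 : A 2 0 + d * A 2 1 = 0 := by
      have := congrFun hv 2
      simp only [Pi.neg_apply] at this
      simpa using this
    refine ⟨Or.inr (by rw [e0, h0]), by rw [e10, h0, h1]; ring, by rw [e20]; exact h2, ?_, ?_⟩
    · refine ⟨-y, ?_⟩; rw [e21]; rw [hy] at h2; linarith
    · refine ⟨x, ?_⟩
      rw [e0, e01, e11]
      rw [hx] at h1
      linear_combination (d:ℤ) * h0 - h1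
lemma blk_mul (P Q : Matrix (Fin 3) (Fin 3) ℤ) (h1 : P 1 0 = 0) (h2 : P 2 0 = 0) :
    (Matrix.of fun i j : Fin 2 => (P * Q) i.succ j.succ) =
    (Matrix.of fun i j : Fin 2 => P i.succ j.succ) *
      (Matrix.of fun i j : Fin 2 => Q i.succ j.succ) := by
  ext i j
  fin_cases i <;> fin_cases j <;>
    simp [Matrix.mul_apply, Fin.sum_univ_three, Fin.sum_univ_two, h1, h2]

lemma det_blk (P : Matrix (Fin 3) (Fin 3) ℤ) (h1 : P 1 0 = 0) (h2 : P 2 0 = 0) :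
    P.det = P 0 0 * (Matrix.of fun i j : Fin 2 => P i.succ j.succ).det := by
  rw [Matrix.det_fin_three, Matrix.det_fin_two]
  simp only [Matrix.of_apply, h1, h2]
  show _ = P 0 0 * (P 1 1 * P 2 2 - P 1 2 * P 2 1)
  ring

lemma det_blk_unit (N d : ℕ) (γ : SL3) (h : γ ∈ stabLineGroup N d) :
    conjM d γ 0 0 * (blkOf d γ).det = 1 := by
  obtain ⟨he, h10, h20, -⟩ := facts N d γ h
  show conjM d γ 0 0 * (Matrix.of fun i j : Fin 2 => conjM d γ i.succ j.succ).det = 1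
  rw [← det_blk (conjM d γ) h10 h20, conjM_det]

noncomputable def piHom (N d : ℕ) : ↥(stabLineGroup N d) →* Matrix.GeneralLinearGroup (Fin 2) ℤ where
  toFun γ := Matrix.nonsingInvUnit (blkOf d ↑γ)
    (IsUnit.of_mul_eq_one _ (by rw [mul_comm]; exact det_blk_unit N d ↑γ γ.2))
  map_one' := by
    apply Units.ext
    show blkOf d ((1 : ↥(stabLineGroup N d)) : SL3) = 1
    rw [show ((1 : ↥(stabLineGroup N d)) : SL3) = 1 from rfl]
    have : conjM d (1 : SL3) = 1 := by
      unfold conjM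
      rw [mul_one, inv_mul_cancel, Matrix.SpecialLinearGroup.coe_one]
    unfold blkOf
    rw [this]
    ext i j
    fin_cases i <;> fin_cases j <;> simp [Matrix.one_apply]
  map_mul' := by
    intro a b
    apply Units.ext
    show blkOf d (↑a * ↑b) = blkOf d ↑a * blkOf d ↑b
    obtain ⟨-, h10, h20, -⟩ := facts N d ↑a a.2
    unfold blkOf
    rw [conjM_mul]
    exact blk_mul _ _ h10 h20

lemma piHom_coe (N d : ℕ) (γ : ↥(stabLineGroup N d)) :
    ((piHom N d γ : Matrix (Fin 2) (Fin 2) ℤ)) = blkOf d ↑γ := rfl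
lemma construct_mem (N d : ℕ) (hNd : (N:ℤ) = d * (N / d : ℕ)) (B : SL3)
    (e β c p q r s : ℤ)
    (hB : (B : Matrix (Fin 3) (Fin 3) ℤ) = !![e, β, c; 0, p, q; 0, r, s])
    (he : e = 1 ∨ e = -1)
    (h1 : ((N / d : ℕ):ℤ) ∣ (e - p - d * β)) (h2 : ((N / d : ℕ):ℤ) ∣ r) :
    gMat d * B * (gMat d)⁻¹ ∈ stabLineGroup N d := by
  have hγ : ((gMat d * B * (gMat d)⁻¹ : SL3) : Matrix (Fin 3) (Fin 3) ℤ) =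
      !![e - d * β, β, c;
         d * e - d * (d * β + p), d * β + p, d * c + q;
         -(d * r), r, s] := by
    rw [conj_back, hB]
    ext i j
    fin_cases i <;> fin_cases j <;> simp [Matrix.vecHead, Matrix.vecTail] <;> ring
  constructor
  · constructor
    · rw [hγ]
      show (N:ℤ) ∣ d * e - d * (d * β + p)
      have : d * e - d * (d * β + p) = d * (e - p - d * β) := by ring
      rw [this, hNd]
      exact mul_dvd_mul_left _ h1
    · rw [hγ]
      show (N:ℤ) ∣ -(d * r)
      rw [hNd]
      exact dvd_neg.mpr (mul_dvd_mul_left _ h2)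
  · rw [hγ, mulVec_eq]
    rcases he with he | he <;> [left; right] <;> subst he <;>
      · ext i
        fin_cases i <;> simp <;> ring
lemma solve_beta (d m : ℕ) (t : ℤ) (h : ((Nat.gcd d m : ℕ):ℤ) ∣ t) :
    ∃ β : ℤ, (m:ℤ) ∣ t - d * β := by
  obtain ⟨u, hu⟩ := h
  refine ⟨u * Int.gcdA d m, ⟨u * Int.gcdB d m, ?_⟩⟩
  have hg : ((Nat.gcd d m : ℕ):ℤ) = d * Int.gcdA d m + m * Int.gcdB d m := by
    have := Int.gcd_eq_gcd_ab (d:ℤ) (m:ℤ)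
    rwa [Int.gcd_natCast_natCast] at this
  rw [hu, hg]
  ring

lemma k_dvd (d m : ℕ) (hd : 0 < d) (β : ℤ) (h : (m:ℤ) ∣ d * β) :
    ((m / Nat.gcd d m : ℕ):ℤ) ∣ β := by
  set Δ := Nat.gcd d m with hΔdef
  have hΔ : 0 < Δ := Nat.gcd_pos_of_pos_left _ hd
  have hk : m = Δ * (m / Δ) := (Nat.mul_div_cancel' (Nat.gcd_dvd_right d m)).symm
  have hdd : d = Δ * (d / Δ) := (Nat.mul_div_cancel' (Nat.gcd_dvd_left d m)).symm
  have h2 : ((m/Δ:ℕ):ℤ) ∣ ((d/Δ:ℕ):ℤ) * β := by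
    obtain ⟨x, hx⟩ := h
    refine ⟨x, ?_⟩
    have hΔ0 : (Δ:ℤ) ≠ 0 := by positivity
    apply mul_left_cancel₀ hΔ0
    have hdZ : (d:ℤ) = (Δ:ℤ) * ((d/Δ:ℕ):ℤ) := by exact_mod_cast congrArg (Nat.cast : ℕ → ℤ) hdd
    have hmZ : (m:ℤ) = (Δ:ℤ) * ((m/Δ:ℕ):ℤ) := by exact_mod_cast congrArg (Nat.cast : ℕ → ℤ) hk
    rw [hdZ, hmZ] at hx
    linear_combination hx
  have hco : IsCoprime ((m/Δ:ℕ):ℤ) ((d/Δ:ℕ):ℤ) := by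
    rw [Int.isCoprime_iff_gcd_eq_one, Int.gcd_natCast_natCast]
    exact (Nat.coprime_div_gcd_div_gcd hΔ).symm
  exact hco.dvd_of_dvd_mul_left h2
def uMat (w c : ℤ) : SL3 := ⟨!![1, w, c; 0, 1, 0; 0, 0, 1], by simp [Matrix.det_fin_three, Matrix.vecHead, Matrix.vecTail]⟩

lemma uMat_mul (w c w' c' : ℤ) : uMat w c * uMat w' c' = uMat (w + w') (c + c') := by
  apply Subtype.ext
  show (uMat w c : Matrix (Fin 3) (Fin 3) ℤ) * (uMat w' c' : Matrix (Fin 3) (Fin 3) ℤ) = _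
  ext i j
  fin_cases i <;> fin_cases j <;>
    simp [uMat, Matrix.mul_apply, Fin.sum_univ_three, Matrix.vecHead, Matrix.vecTail] <;> ring

lemma uMat_mem (N d : ℕ) (hNd : (N:ℤ) = d * (N / d : ℕ)) (w c : ℤ)
    (hw : ((N / d : ℕ):ℤ) ∣ (d:ℤ) * w) :
    gMat d * uMat w c * (gMat d)⁻¹ ∈ stabLineGroup N d :=
  construct_mem N d hNd _ 1 w c 1 0 0 1 rfl (Or.inl rfl)
    (by rw [show (1:ℤ) - 1 - d * w = -((d:ℤ) * w) by ring]; exact dvd_neg.mpr hw)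
    (dvd_zero _)

lemma uMat_blk (d : ℕ) (w c : ℤ) : blkOf d (gMat d * uMat w c * (gMat d)⁻¹) = 1 := by
  unfold blkOf
  rw [conjM_conj]
  ext i j
  fin_cases i <;> fin_cases j <;> simp [uMat, Matrix.one_apply, Matrix.vecHead, Matrix.vecTail]

lemma uMat_ker (N d : ℕ) (hNd : (N:ℤ) = d * (N / d : ℕ)) (w c : ℤ)
    (hw : ((N / d : ℕ):ℤ) ∣ (d:ℤ) * w) :
    (⟨gMat d * uMat w c * (gMat d)⁻¹, uMat_mem N d hNd w c hw⟩ : ↥(stabLineGroup N d)) ∈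
      (piHom N d).ker := by
  rw [MonoidHom.mem_ker]
  apply Units.ext
  show blkOf d (gMat d * uMat w c * (gMat d)⁻¹) = 1
  exact uMat_blk d w c
def bOf (e β p q r s : ℤ)
    (h : (!![e, β, 0; 0, p, q; 0, r, s] : Matrix (Fin 3) (Fin 3) ℤ).det = 1) : SL3 := ⟨_, h⟩

noncomputable def kerF (N d : ℕ) (k : ℤ) (hNd : (N:ℤ) = d * (N / d : ℕ))
    (hdk : ((N / d : ℕ):ℤ) ∣ (d:ℤ) * k) :
    Multiplicative (ℤ × ℤ) →* ↥((piHom N d).ker) where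
  toFun z := ⟨⟨gMat d * uMat (k * z.toAdd.1) z.toAdd.2 * (gMat d)⁻¹,
      uMat_mem N d hNd _ _ (by rw [← mul_assoc]; exact hdk.mul_right _)⟩,
    uMat_ker N d hNd _ _ (by rw [← mul_assoc]; exact hdk.mul_right _)⟩
  map_one' := by
    apply Subtype.ext
    apply Subtype.ext
    show gMat d * uMat (k * (Multiplicative.toAdd (1 : Multiplicative (ℤ × ℤ))).1)
        (Multiplicative.toAdd (1 : Multiplicative (ℤ × ℤ))).2 * (gMat d)⁻¹ = 1
    have h1 : uMat (k * (Multiplicative.toAdd (1 : Multiplicative (ℤ × ℤ))).1)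
        (Multiplicative.toAdd (1 : Multiplicative (ℤ × ℤ))).2 = 1 := by
      apply Subtype.ext
      show (uMat (k * 0) 0 : Matrix (Fin 3) (Fin 3) ℤ) = 1
      ext i j
      fin_cases i <;> fin_cases j <;>
        simp [uMat, Matrix.one_apply, Matrix.vecHead, Matrix.vecTail]
    rw [h1]
    group
  map_mul' := by
    intro a b
    apply Subtype.ext
    apply Subtype.ext
    show gMat d * uMat (k * (Multiplicative.toAdd (a * b)).1)
        (Multiplicative.toAdd (a * b)).2 * (gMat d)⁻¹ =
      (gMat d * uMat (k * (Multiplicative.toAdd a).1) (Multiplicative.toAdd a).2 * (gMat d)⁻¹) *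
      (gMat d * uMat (k * (Multiplicative.toAdd b).1) (Multiplicative.toAdd b).2 * (gMat d)⁻¹)
    rw [toAdd_mul, Prod.fst_add, Prod.snd_add, mul_add, ← uMat_mul]
    group

lemma kerF_apply (N d : ℕ) (k : ℤ) (hNd : (N:ℤ) = d * (N / d : ℕ))
    (hdk : ((N / d : ℕ):ℤ) ∣ (d:ℤ) * k) (z : Multiplicative (ℤ × ℤ)) :
    (((kerF N d k hNd hdk z : ↥((piHom N d).ker)) : ↥(stabLineGroup N d)) : SL3) =
      gMat d * uMat (k * z.toAdd.1) z.toAdd.2 * (gMat d)⁻¹ := rfl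

lemma kerF_inj (N d : ℕ) (k : ℤ) (hNd : (N:ℤ) = d * (N / d : ℕ))
    (hdk : ((N / d : ℕ):ℤ) ∣ (d:ℤ) * k) (hk0 : k ≠ 0) :
    Function.Injective (kerF N d k hNd hdk) := by
  intro a b hab
  have hab' : (((kerF N d k hNd hdk a : ↥((piHom N d).ker)) : ↥(stabLineGroup N d)) : SL3) =
      (((kerF N d k hNd hdk b : ↥((piHom N d).ker)) : ↥(stabLineGroup N d)) : SL3) := by
    rw [hab]
  rw [kerF_apply, kerF_apply] at hab'
  have hmat := congrArg (conjM d) hab'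
  rw [conjM_conj, conjM_conj] at hmat
  have h01 := congrFun (congrFun hmat 0) 1
  have h02 := congrFun (congrFun hmat 0) 2
  simp only [uMat] at h01 h02
  have h1 : (Multiplicative.toAdd a).1 = (Multiplicative.toAdd b).1 := by
    apply mul_left_cancel₀ hk0
    simpa using h01
  have h2 : (Multiplicative.toAdd a).2 = (Multiplicative.toAdd b).2 := by
    simpa using h02
  have h3 : Multiplicative.toAdd a = Multiplicative.toAdd b := Prod.ext h1 h2
  rw [← ofAdd_toAdd a, ← ofAdd_toAdd b, h3]

/-- **Statement 5.**  Let `d` be a positive divisor of `N` and `Δ = gcd(d, N/d)`.  With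
`g_d = [[1,0,0],[d,1,0],[0,0,1]]` and `S` the subgroup of `Γ₀(N,3)` of elements fixing
`(1,d,0)ᵀ` up to sign: (i) for `γ ∈ S` the matrix `g_d⁻¹ γ g_d` has vanishing `(2,1)` and
`(3,1)` entries; (ii) the map sending `γ` to the lower-right `2×2` block of `g_d⁻¹ γ g_d`
is a group homomorphism `S → GL₂(ℤ)`; (iii) its image is exactly `Γ₁(N/d, Δ)^*`; and
(iv) its kernel is isomorphic to `ℤ × ℤ`. -/
theorem stmt_5 (N d : ℕ) (hN : 0 < N) (hd0 : 0 < d) (hdN : d ∣ N) :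
    (∀ γ ∈ stabLineGroup N d,
      (((gMat d)⁻¹ * γ * gMat d : SL3) : Matrix (Fin 3) (Fin 3) ℤ) 1 0 = 0 ∧
      (((gMat d)⁻¹ * γ * gMat d : SL3) : Matrix (Fin 3) (Fin 3) ℤ) 2 0 = 0) ∧
    ∃ π : ↥(stabLineGroup N d) →* Matrix.GeneralLinearGroup (Fin 2) ℤ,
      (∀ γ : ↥(stabLineGroup N d),
        ((π γ : Matrix (Fin 2) (Fin 2) ℤ)) = Matrix.of fun i j : Fin 2 =>
          (((gMat d)⁻¹ * (γ : SL3) * gMat d : SL3) : Matrix (Fin 3) (Fin 3) ℤ)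
            i.succ j.succ) ∧
      (∀ m : Matrix.GeneralLinearGroup (Fin 2) ℤ,
        m ∈ π.range ↔
          (((m : Matrix (Fin 2) (Fin 2) ℤ).det = 1 ∨
            (m : Matrix (Fin 2) (Fin 2) ℤ).det = -1) ∧
           ((N / d : ℕ) : ℤ) ∣ (m : Matrix (Fin 2) (Fin 2) ℤ) 1 0 ∧
           ((Nat.gcd d (N / d) : ℕ) : ℤ) ∣
             ((m : Matrix (Fin 2) (Fin 2) ℤ) 0 0 - (m : Matrix (Fin 2) (Fin 2) ℤ).det))) ∧
      Nonempty (↥π.ker ≃* Multiplicative (ℤ × ℤ)) := by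
  have hNd : (N:ℤ) = d * (N / d : ℕ) := by
    exact_mod_cast (Nat.mul_div_cancel' hdN).symm
  have hm : 0 < N / d := Nat.div_pos (Nat.le_of_dvd hN hdN) hd0
  have hΔpos : 0 < Nat.gcd d (N / d) := Nat.gcd_pos_of_pos_left _ hd0
  have hkpos : 0 < (N / d) / Nat.gcd d (N / d) :=
    Nat.div_pos (Nat.le_of_dvd hm (Nat.gcd_dvd_right d (N / d))) hΔpos
  have hdZ : (d:ℤ) = (Nat.gcd d (N / d) : ℕ) * ((d / Nat.gcd d (N / d) : ℕ) : ℤ) := by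
    exact_mod_cast congrArg (Nat.cast : ℕ → ℤ)
      (Nat.mul_div_cancel' (Nat.gcd_dvd_left d (N / d))).symm
  have hmZ : ((N / d : ℕ):ℤ) =
      (Nat.gcd d (N / d) : ℕ) * (((N / d) / Nat.gcd d (N / d) : ℕ) : ℤ) := by
    exact_mod_cast congrArg (Nat.cast : ℕ → ℤ)
      (Nat.mul_div_cancel' (Nat.gcd_dvd_right d (N / d))).symm
  have hdk : ((N / d : ℕ):ℤ) ∣ (d:ℤ) * (((N / d) / Nat.gcd d (N / d) : ℕ) : ℤ) := by
    refine ⟨((d / Nat.gcd d (N / d) : ℕ) : ℤ), ?_⟩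
    rw [hmZ, hdZ]
    ring
  have hd0' : (d:ℤ) ≠ 0 := by positivity
  refine ⟨?_, ?_⟩
  · intro γ hγ
    obtain ⟨-, h10, h20, -⟩ := facts N d γ hγ
    exact ⟨h10, h20⟩
  refine ⟨piHom N d, fun γ => rfl, ?_, ?_⟩
  · -- range characterisation
    intro mm
    constructor
    · rintro ⟨γ, rfl⟩
      obtain ⟨he, h10, h20, hdvd1, hdvd2⟩ := facts N d ↑γ γ.2
      have hval : ((piHom N d γ : Matrix (Fin 2) (Fin 2) ℤ)) = blkOf d ↑γ := rfl
      have hdet0 := det_blk_unit N d ↑γ γ.2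
      have hdet : (blkOf d ↑γ).det = conjM d ↑γ 0 0 := by
        rcases he with h | h <;> rw [h] at hdet0 ⊢ <;> linarith
      rw [hNd] at hdvd1 hdvd2
      replace hdvd1 : ((N / d : ℕ):ℤ) ∣ conjM d ↑γ 2 1 :=
        (mul_dvd_mul_iff_left hd0').mp hdvd1
      replace hdvd2 : ((N / d : ℕ):ℤ) ∣
          (conjM d ↑γ 0 0 - conjM d ↑γ 1 1 - d * conjM d ↑γ 0 1) :=
        (mul_dvd_mul_iff_left hd0').mp hdvd2
      refine ⟨?_, ?_, ?_⟩
      · rw [hval, hdet]; exact he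
      · rw [hval]; exact hdvd1
      · rw [hval, hdet]
        have hΔm : ((Nat.gcd d (N / d) : ℕ):ℤ) ∣ ((N / d : ℕ):ℤ) :=
          Int.natCast_dvd_natCast.mpr (Nat.gcd_dvd_right d (N / d))
        have hΔd : ((Nat.gcd d (N / d) : ℕ):ℤ) ∣ (d:ℤ) :=
          Int.natCast_dvd_natCast.mpr (Nat.gcd_dvd_left d (N / d))
        have h1 := dvd_trans hΔm hdvd2
        have h2 : ((Nat.gcd d (N / d) : ℕ):ℤ) ∣ (d:ℤ) * conjM d ↑γ 0 1 := hΔd.mul_right _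
        have hre : blkOf d ↑γ 0 0 - conjM d ↑γ 0 0 =
            -((conjM d ↑γ 0 0 - conjM d ↑γ 1 1 - d * conjM d ↑γ 0 1) +
              d * conjM d ↑γ 0 1) := by
          show conjM d ↑γ 1 1 - conjM d ↑γ 0 0 = _
          ring
        rw [hre]
        exact dvd_neg.mpr (dvd_add h1 h2)
    · rintro ⟨hdet, hr, hΔ⟩
      have hΔ' : ((Nat.gcd d (N / d) : ℕ):ℤ) ∣
          ((mm : Matrix (Fin 2) (Fin 2) ℤ).det - (mm : Matrix (Fin 2) (Fin 2) ℤ) 0 0) := by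
        have := dvd_neg.mpr hΔ
        rwa [neg_sub] at this
      obtain ⟨β, hβ⟩ := solve_beta d (N / d)
        ((mm : Matrix (Fin 2) (Fin 2) ℤ).det - (mm : Matrix (Fin 2) (Fin 2) ℤ) 0 0) hΔ'
      have hdet2 : (mm : Matrix (Fin 2) (Fin 2) ℤ).det =
          (mm : Matrix (Fin 2) (Fin 2) ℤ) 0 0 * (mm : Matrix (Fin 2) (Fin 2) ℤ) 1 1 -
          (mm : Matrix (Fin 2) (Fin 2) ℤ) 0 1 * (mm : Matrix (Fin 2) (Fin 2) ℤ) 1 0 :=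
        Matrix.det_fin_two _
      have hee : (mm : Matrix (Fin 2) (Fin 2) ℤ).det * (mm : Matrix (Fin 2) (Fin 2) ℤ).det
          = 1 := by rcases hdet with h | h <;> rw [h] <;> norm_num
      have hdetB : (!![(mm : Matrix (Fin 2) (Fin 2) ℤ).det, β, 0;
          0, (mm : Matrix (Fin 2) (Fin 2) ℤ) 0 0, (mm : Matrix (Fin 2) (Fin 2) ℤ) 0 1;
          0, (mm : Matrix (Fin 2) (Fin 2) ℤ) 1 0, (mm : Matrix (Fin 2) (Fin 2) ℤ) 1 1]
          : Matrix (Fin 3) (Fin 3) ℤ).det = 1 := by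
        rw [Matrix.det_fin_three]
        simp [Matrix.vecHead, Matrix.vecTail]
        linear_combination (-(mm : Matrix (Fin 2) (Fin 2) ℤ).det) * hdet2 + hee
      have hmem := construct_mem N d hNd (bOf _ _ _ _ _ _ hdetB)
        ((mm : Matrix (Fin 2) (Fin 2) ℤ).det) β 0
        ((mm : Matrix (Fin 2) (Fin 2) ℤ) 0 0) ((mm : Matrix (Fin 2) (Fin 2) ℤ) 0 1)
        ((mm : Matrix (Fin 2) (Fin 2) ℤ) 1 0) ((mm : Matrix (Fin 2) (Fin 2) ℤ) 1 1)
        rfl hdet (by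
          have : (mm : Matrix (Fin 2) (Fin 2) ℤ).det -
              (mm : Matrix (Fin 2) (Fin 2) ℤ) 0 0 - (d:ℤ) * β =
              ((mm : Matrix (Fin 2) (Fin 2) ℤ).det -
              (mm : Matrix (Fin 2) (Fin 2) ℤ) 0 0) - (d:ℤ) * β := by ring
          rw [this]; exact hβ) hr
      refine ⟨⟨_, hmem⟩, ?_⟩
      apply Units.ext
      show blkOf d (gMat d * bOf _ _ _ _ _ _ hdetB * (gMat d)⁻¹) = (mm : Matrix (Fin 2) (Fin 2) ℤ)
      show (Matrix.of fun i j : Fin 2 =>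
        conjM d (gMat d * bOf _ _ _ _ _ _ hdetB * (gMat d)⁻¹) i.succ j.succ) = _
      rw [conjM_conj]
      ext i j
      fin_cases i <;> fin_cases j <;> simp [bOf, Matrix.vecHead, Matrix.vecTail]
  · -- kernel
    have hk0 : ((((N / d) / Nat.gcd d (N / d) : ℕ)) : ℤ) ≠ 0 := by positivity
    refine Nonempty.intro ?_
    have hsurj : Function.Surjective
        (kerF N d (((N / d) / Nat.gcd d (N / d) : ℕ) : ℤ) hNd hdk) := by
      rintro ⟨⟨γ, hS⟩, hker⟩
      rw [MonoidHom.mem_ker] at hker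
      have hblk : blkOf d γ = 1 := congrArg Units.val hker
      obtain ⟨he, h10, h20, hdvd1, hdvd2⟩ := facts N d γ hS
      have b11 : conjM d γ 1 1 = 1 := by
        have := congrFun (congrFun hblk 0) 0
        simpa [blkOf, Matrix.one_apply] using this
      have b12 : conjM d γ 1 2 = 0 := by
        have := congrFun (congrFun hblk 0) 1
        simpa [blkOf, Matrix.one_apply] using this
      have b21 : conjM d γ 2 1 = 0 := by
        have := congrFun (congrFun hblk 1) 0
        simpa [blkOf, Matrix.one_apply] using this
      have b22 : conjM d γ 2 2 = 1 := by
        have := congrFun (congrFun hblk 1) 1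
        simpa [blkOf, Matrix.one_apply] using this
      have b00 : conjM d γ 0 0 = 1 := by
        have := det_blk_unit N d γ hS
        rw [hblk] at this
        simpa using this
      rw [hNd] at hdvd2
      replace hdvd2 : ((N / d : ℕ):ℤ) ∣
          (conjM d γ 0 0 - conjM d γ 1 1 - d * conjM d γ 0 1) :=
        (mul_dvd_mul_iff_left hd0').mp hdvd2
      rw [b00, b11] at hdvd2
      have hdvd3 : ((N / d : ℕ):ℤ) ∣ (d:ℤ) * conjM d γ 0 1 := by
        have h' := dvd_neg.mpr hdvd2
        rwa [show -((1:ℤ) - 1 - d * conjM d γ 0 1) = (d:ℤ) * conjM d γ 0 1 by ring] at h'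
      obtain ⟨t, ht⟩ := k_dvd d (N / d) hd0 _ hdvd3
      refine ⟨Multiplicative.ofAdd (t, conjM d γ 0 2), ?_⟩
      apply Subtype.ext
      apply Subtype.ext
      rw [kerF_apply]
      rw [toAdd_ofAdd]
      have hc : conjM d γ =
          ((uMat ((((N / d) / Nat.gcd d (N / d) : ℕ) : ℤ) * t) (conjM d γ 0 2) : SL3) :
            Matrix (Fin 3) (Fin 3) ℤ) := by
        ext i j
        fin_cases i <;> fin_cases j <;>
          simp only [uMat, Matrix.cons_val', Matrix.cons_val_zero, Matrix.cons_val_one,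
            Matrix.head_cons, Matrix.empty_val', Matrix.cons_val_fin_one, Matrix.head_fin_const]
        · exact b00
        · exact ht
        · rfl
        · exact h10
        · exact b11
        · exact b12
        · exact h20
        · exact b21
        · exact b22
      have hsl : ((gMat d)⁻¹ * γ * gMat d : SL3) =
          uMat ((((N / d) / Nat.gcd d (N / d) : ℕ) : ℤ) * t) (conjM d γ 0 2) :=
        Subtype.ext hc
      show gMat d * uMat ((((N / d) / Nat.gcd d (N / d) : ℕ) : ℤ) * t) (conjM d γ 0 2) *
          (gMat d)⁻¹ = γ
      rw [← hsl]
      group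
    exact (MulEquiv.ofBijective _
      ⟨kerF_inj N d _ hNd hdk hk0, hsurj⟩).symm
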